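/- Let F be a finite field of even characteristic (cardinality even), and let A, B, μ, ν ∈ F with 4AB - Bμ² - ν² ≠ 0. Then there exist x, z ∈ F such that x² + μx + A + νz + Bz² = 0. -/

import Mathlib

/-- In a finite field `F` of even cardinality, if
`4AB - Bμ² - ν² ≠ 0` then the equation `x² + μx + A + νz + Bz² = 0`
has a solution. -/
theorem solvable_even_char
    (F : Type*) [Field F] [Fintype F] (heven : Even (Fintype.card F))
    (A B μ ν : F) (hT : 4 * A * B - B * μ ^ 2 - ν ^ 2 ≠ 0) :
    ∃ x z : F, x ^ 2 + μ * x + A + ν * z + B * z ^ 2 = 0 := by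
  classical
  have hchar := ringChar.charP F
  have hpp : (ringChar F).Prime := CharP.char_is_prime F (ringChar F)
  obtain ⟨n, hn⟩ := FiniteField.card F (ringChar F)
  have hp2 : ringChar F = 2 := by
    have hd2 : (2 : ℕ) ∣ ringChar F ^ (n : ℕ) := by
      rw [← hn.2]; exact heven.two_dvd
    have := Nat.prime_two.dvd_of_dvd_pow hd2
    exact ((Nat.prime_dvd_prime_iff_eq Nat.prime_two hpp).mp this).symm
  have h2 : (2 : F) = 0 := by
    have := CharP.cast_eq_zero F (ringChar F)
    rw [hp2] at this; simpa using this
  -- squaring is surjective in char 2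
  have hsq : Function.Surjective (fun x : F => x ^ 2) := by
    apply Finite.injective_iff_surjective.mp
    intro a b hab
    simp only at hab
    have hz : (a - b) ^ 2 = 0 := by
      linear_combination hab + (b ^ 2 - a * b) * h2
    exact sub_eq_zero.mp (pow_eq_zero_iff two_ne_zero |>.mp hz)
  obtain ⟨s, hs⟩ := hsq B
  simp only at hs
  -- slope nonzero
  have hd : ν + s * μ ≠ 0 := by
    intro h
    apply hT
    have hν : ν = s * μ := by linear_combination h - s * μ * h2
    linear_combination (-(ν + s * μ)) * hν + (-μ ^ 2) * hs +
      (2 * A * B - B * μ ^ 2) * h2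
  refine ⟨s * (A / (ν + s * μ)), A / (ν + s * μ), ?_⟩
  have hdd : (ν + s * μ) / (ν + s * μ) = 1 := div_self hd
  linear_combination (A / (ν + s * μ)) ^ 2 * hs + A * hdd +
    (B * (A / (ν + s * μ)) ^ 2 + A) * h2
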